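/- There exists a constant c > 0 such that for every integer m ≥ 2, the unlabeled minimum number of running buffers of the dependency grid D(m,2m) satisfies uMRB(D(m,2m)) ≥ c·m; equivalently, writing n = m² for the number of start (respectively goal) vertices of D(m,2m), uMRB(D(m,2m)) = Ω(√n). -/

import Mathlib

open scoped Classical

/-- Two grid vertices (coordinates in `ℕ × ℕ`) are adjacent iff their `L¹` distance is `1`. -/
def gridAdj (a b : ℕ × ℕ) : Prop := Nat.dist a.1 b.1 + Nat.dist a.2 b.2 = 1

/-- The vertex set of the dependency grid `D(m, 2m)`, with `0`-based coordinates. -/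
def gridVerts (m : ℕ) : Finset (ℕ × ℕ) := (Finset.range m) ×ˢ (Finset.range (2 * m))

/-- The start vertices of `D(m, 2m)`: those whose coordinate sum is even
(so that the vertex `(1,1)` of the `1`-based description, i.e. `(0,0)` here, is a start). -/
def gridStarts (m : ℕ) : Finset (ℕ × ℕ) := (gridVerts m).filter (fun v => Even (v.1 + v.2))

/-- The goal vertices of `D(m, 2m)`: those whose coordinate sum is odd. -/
def gridGoals (m : ℕ) : Finset (ℕ × ℕ) := (gridVerts m).filter (fun v => Odd (v.1 + v.2))

/-- `gridN m g` is the set of start vertices of `D(m, 2m)` adjacent to some vertex of `g`. -/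
noncomputable def gridN (m : ℕ) (g : Finset (ℕ × ℕ)) : Finset (ℕ × ℕ) :=
  (gridStarts m).filter (fun s => ∃ t ∈ g, gridAdj s t)

/-- The number of running buffers of a linear ordering `π` of the `m * m` goal vertices of
`D(m, 2m)`: the maximum over `0 ≤ i ≤ m*m` of `max (0, |N(g_i)| - i)` (truncated
subtraction), where `g_i` is the set of the first `i` goals in the ordering. -/
noncomputable def gridURB (m : ℕ) (π : Fin (m * m) → ℕ × ℕ) : ℕ :=
  (Finset.range (m * m + 1)).sup (fun i =>
    (gridN m ((Finset.univ.filter (fun j : Fin (m * m) => (j : ℕ) < i)).image π)).card - i)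

/-- The unlabeled minimum number of running buffers of the dependency grid `D(m, 2m)`:
the minimum of `gridURB m π` over all bijections `π` from `Fin (m*m)` onto the goal
vertices. -/
noncomputable def gridUMRB (m : ℕ) : ℕ :=
  sInf {k | ∃ π : Fin (m * m) → ℕ × ℕ, Function.Injective π ∧
    Finset.image π Finset.univ = gridGoals m ∧ gridURB m π = k}


/-! ### Auxiliary development for the lower bound -/

/-- Boundary lemma: if `p a` holds, `p b` fails and `a < b`, there is a transition point. -/
lemma grid_bdry (p : ℕ → Prop) [DecidablePred p] :
    ∀ b a, a < b → p a → ¬ p b → ∃ t, a ≤ t ∧ t + 1 ≤ b ∧ p t ∧ ¬ p (t + 1) := by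
  intro b
  induction b with
  | zero => intro a h; omega
  | succ b ih =>
    intro a hab hpa hpb
    by_cases hb : p b
    · exact ⟨b, by omega, by omega, hb, hpb⟩
    · have hab' : a < b := by
        rcases Nat.lt_succ_iff_lt_or_eq.mp hab with h | h
        · exact h
        · subst h; exact absurd hpa hb
      obtain ⟨t, h1, h2, h3, h4⟩ := ih a hab' hpa hb
      exact ⟨t, h1, by omega, h3, h4⟩

lemma grid_bdry' (p : ℕ → Prop) [DecidablePred p] (a b : ℕ) (hab : a < b)
    (hpa : ¬ p a) (hpb : p b) :
    ∃ t, a + 1 ≤ t ∧ t ≤ b ∧ p t ∧ ¬ p (t - 1) := by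
  obtain ⟨t, h1, h2, h3, h4⟩ := grid_bdry (fun t => ¬ p t) b a hab hpa (not_not.mpr hpb)
  exact ⟨t + 1, by omega, by omega, not_not.mp h4, by simpa using h3⟩

/-- The goal vertex of the "domino" in column `x`, row `j` (rows pair `y = 2j, 2j+1`). -/
def dgoal (x j : ℕ) : ℕ × ℕ := (x, 2 * j + 1 - x % 2)

/-- The start vertex of the domino in column `x`, row `j`. -/
def dstart (x j : ℕ) : ℕ × ℕ := (x, 2 * j + x % 2)

/-- The vertical matching sending each goal to its domino partner start. -/
def gmu (v : ℕ × ℕ) : ℕ × ℕ := (v.1, if v.2 % 2 = 1 then v.2 - 1 else v.2 + 1)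

lemma mem_gridGoals {m x y : ℕ} :
    (x, y) ∈ gridGoals m ↔ x < m ∧ y < 2 * m ∧ (x + y) % 2 = 1 := by
  rw [gridGoals, Finset.mem_filter, gridVerts, Finset.mem_product, Finset.mem_range,
    Finset.mem_range, Nat.odd_iff]
  tauto

lemma mem_gridStarts {m x y : ℕ} :
    (x, y) ∈ gridStarts m ↔ x < m ∧ y < 2 * m ∧ (x + y) % 2 = 0 := by
  rw [gridStarts, Finset.mem_filter, gridVerts, Finset.mem_product, Finset.mem_range,
    Finset.mem_range, Nat.even_iff]
  tauto

lemma dgoal_mem {m x j : ℕ} (hx : x < m) (hj : j < m) : dgoal x j ∈ gridGoals m := by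
  show (x, 2 * j + 1 - x % 2) ∈ gridGoals m
  rw [mem_gridGoals]; omega

lemma dstart_mem {m x j : ℕ} (hx : x < m) (hj : j < m) : dstart x j ∈ gridStarts m := by
  show (x, 2 * j + x % 2) ∈ gridStarts m
  rw [mem_gridStarts]; omega

lemma goal_ex {m : ℕ} {t : ℕ × ℕ} (ht : t ∈ gridGoals m) :
    t.1 < m ∧ t.2 / 2 < m ∧ dgoal t.1 (t.2 / 2) = t := by
  obtain ⟨x, y⟩ := t
  rw [mem_gridGoals] at ht
  refine ⟨ht.1, by omega, ?_⟩
  simp only [dgoal, Prod.mk.injEq, true_and]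
  omega

lemma dgoal_inj {x j x' j' : ℕ} (h : dgoal x j = dgoal x' j') : x = x' ∧ j = j' := by
  simp only [dgoal, Prod.mk.injEq] at h
  omega

lemma dstart_inj {x j x' j' : ℕ} (h : dstart x j = dstart x' j') : x = x' ∧ j = j' := by
  simp only [dstart, Prod.mk.injEq] at h
  omega

lemma gmu_dgoal (x j : ℕ) : gmu (dgoal x j) = dstart x j := by
  simp only [gmu, dgoal, dstart, Prod.mk.injEq, true_and]
  split_ifs with h <;> simp only [h, ite_true, ite_false, not_false_eq_true, ↓reduceIte] <;> omega

lemma gmu_inj : Function.Injective gmu := by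
  rintro ⟨x, y⟩ ⟨x', y'⟩ h
  simp only [gmu, Prod.mk.injEq] at h
  obtain ⟨h1, h2⟩ := h
  subst h1
  split_ifs at h2 <;> simp_all <;> omega

lemma adj_vert_even {x j : ℕ} (h : x % 2 = 0) : gridAdj (dstart x (j + 1)) (dgoal x j) := by
  simp only [gridAdj, dstart, dgoal, Nat.dist]
  omega

lemma adj_vert_odd {x j : ℕ} (h : x % 2 = 1) (hj : 1 ≤ j) :
    gridAdj (dstart x (j - 1)) (dgoal x j) := by
  simp only [gridAdj, dstart, dgoal, Nat.dist]
  omega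

lemma adj_horiz {x x' j : ℕ} (h : Nat.dist x x' = 1) : gridAdj (dstart x' j) (dgoal x j) := by
  simp only [Nat.dist] at h
  simp only [gridAdj, dstart, dgoal, Nat.dist]
  omega

lemma gmu_adj {m : ℕ} {t : ℕ × ℕ} (ht : t ∈ gridGoals m) :
    gridAdj (gmu t) t ∧ gmu t ∈ gridStarts m := by
  obtain ⟨x, y⟩ := t
  rw [mem_gridGoals] at ht
  constructor
  · simp only [gridAdj, gmu, Nat.dist]
    split_ifs with h <;> omega
  · simp only [gmu]
    split_ifs with h <;> rw [mem_gridStarts] <;> omega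

lemma image_gmu_subset {m : ℕ} {g : Finset (ℕ × ℕ)} (hg : g ⊆ gridGoals m) :
    g.image gmu ⊆ gridN m g := by
  intro s hs
  obtain ⟨t, ht, rfl⟩ := Finset.mem_image.mp hs
  have h := gmu_adj (hg ht)
  exact Finset.mem_filter.mpr ⟨h.2, t, ht, h.1⟩

lemma card_gridN {m : ℕ} {g : Finset (ℕ × ℕ)} (hg : g ⊆ gridGoals m) :
    (gridN m g).card = g.card + ((gridN m g) \ g.image gmu).card := by
  have h1 := Finset.card_sdiff_add_card_eq_card (image_gmu_subset hg)
  have h2 : (g.image gmu).card = g.card := Finset.card_image_of_injective _ gmu_inj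
  omega

/-- A witness criterion: an unmatched start adjacent to a goal in `g` lies in the extra set. -/
lemma dstart_mem_B {m : ℕ} {g : Finset (ℕ × ℕ)} (hg : g ⊆ gridGoals m)
    {x j : ℕ} (hx : x < m) (hj : j < m) (hnot : dgoal x j ∉ g)
    (x₀ j₀ : ℕ) (h0 : dgoal x₀ j₀ ∈ g) (hadj : gridAdj (dstart x j) (dgoal x₀ j₀)) :
    dstart x j ∈ (gridN m g) \ g.image gmu := by
  rw [Finset.mem_sdiff]
  constructor
  · exact Finset.mem_filter.mpr ⟨dstart_mem hx hj, dgoal x₀ j₀, h0, hadj⟩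
  · intro hmem
    obtain ⟨u, hu, hmu⟩ := Finset.mem_image.mp hmem
    have h1 := goal_ex (hg hu)
    rw [← h1.2.2, gmu_dgoal] at hmu
    obtain ⟨hx', hj'⟩ := dstart_inj hmu
    apply hnot
    have heq : dgoal x j = u := by rw [← hx', ← hj']; exact h1.2.2
    rw [heq]; exact hu

lemma card_le_B (s : Finset ℕ) (B : Finset (ℕ × ℕ)) (ι : ℕ × ℕ → ℕ)
    (h : ∀ a ∈ s, ∃ w ∈ B, ι w = a) : s.card ≤ B.card := by
  calc s.card ≤ (B.image ι).card := by
        apply Finset.card_le_card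
        intro a ha
        obtain ⟨w, hw, he⟩ := h a ha
        exact Finset.mem_image.mpr ⟨w, hw, he⟩
    _ ≤ B.card := Finset.card_image_le

/-- In a row that contains both a goal of `g` and a goal outside `g`, there is a
horizontal boundary witness. -/
lemma row_witness {m : ℕ} {g : Finset (ℕ × ℕ)} (hg : g ⊆ gridGoals m) {j : ℕ} (hj : j < m)
    (h1 : ∃ x, x < m ∧ dgoal x j ∈ g) (h2 : ∃ x, x < m ∧ dgoal x j ∉ g) :
    ∃ w ∈ (gridN m g) \ g.image gmu, w.2 / 2 = j := by
  obtain ⟨a, ha, hpa⟩ := h1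
  obtain ⟨b, hb, hpb⟩ := h2
  rcases lt_trichotomy a b with h | h | h
  · obtain ⟨t, ht1, ht2, ht3, ht4⟩ := grid_bdry (fun x => dgoal x j ∈ g) b a h hpa hpb
    refine ⟨dstart (t + 1) j,
      dstart_mem_B hg (by omega) hj ht4 t j ht3 (adj_horiz (by simp only [Nat.dist]; omega)), ?_⟩
    simp only [dstart]
    omega
  · subst h; exact absurd hpa hpb
  · obtain ⟨t, ht1, ht2, ht3, ht4⟩ := grid_bdry' (fun x => dgoal x j ∈ g) b a h hpb hpa
    refine ⟨dstart (t - 1) j,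
      dstart_mem_B hg (by omega) hj ht4 t j ht3 (adj_horiz (by simp only [Nat.dist]; omega)), ?_⟩
    simp only [dstart]
    omega

lemma card_gridGoals (m : ℕ) : (gridGoals m).card = m * m := by
  have heq : gridGoals m = (Finset.range m ×ˢ Finset.range m).image (fun q => dgoal q.1 q.2) := by
    ext t
    simp only [Finset.mem_image, Finset.mem_product, Finset.mem_range]
    constructor
    · intro ht
      have h := goal_ex ht
      exact ⟨(t.1, t.2 / 2), ⟨h.1, h.2.1⟩, h.2.2⟩
    · rintro ⟨⟨x, j⟩, ⟨hx, hj⟩, rfl⟩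
      exact dgoal_mem hx hj
  rw [heq, Finset.card_image_of_injOn, Finset.card_product, Finset.card_range]
  intro p _ q _ hpq
  obtain ⟨h1, h2⟩ := dgoal_inj hpq
  exact Prod.ext h1 h2

/-- Row-counting: with at least (almost) half the cells present but a missing cell in every
row, at least `m/2` rows are hit. -/
lemma row_count {m : ℕ} (hm : 2 ≤ m) (s : Finset (ℕ × ℕ)) (hs : s ⊆ gridGoals m)
    (hbig : m * m ≤ 2 * s.card + 1)
    (hmiss : ∀ j, j < m → ∃ x, x < m ∧ dgoal x j ∉ s) :
    m / 2 ≤ (s.image (fun t => t.2 / 2)).card := by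
  have hfib : s.card ≤ (m - 1) * (s.image (fun t => t.2 / 2)).card := by
    apply Finset.card_le_mul_card_image
    intro a ha
    obtain ⟨t, ht, hrow⟩ := Finset.mem_image.mp ha
    have hgoal := goal_ex (hs ht)
    have ham : a < m := by rw [← hrow]; exact hgoal.2.1
    obtain ⟨x₀, hx₀, hx₀not⟩ := hmiss a ham
    have hsub : (s.filter (fun u => u.2 / 2 = a)) ⊆
        ((Finset.range m).image (fun x => dgoal x a)).erase (dgoal x₀ a) := by
      intro u hu
      rw [Finset.mem_filter] at hu
      have hu' := goal_ex (hs hu.1)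
      rw [Finset.mem_erase]
      constructor
      · intro hcontra
        rw [← hcontra] at hx₀not
        exact hx₀not hu.1
      · refine Finset.mem_image.mpr ⟨u.1, Finset.mem_range.mpr hu'.1, ?_⟩
        rw [← hu.2]
        exact hu'.2.2
    calc (s.filter (fun u => u.2 / 2 = a)).card
        ≤ (((Finset.range m).image (fun x => dgoal x a)).erase (dgoal x₀ a)).card :=
          Finset.card_le_card hsub
      _ = ((Finset.range m).image (fun x => dgoal x a)).card - 1 := by
          rw [Finset.card_erase_of_mem]
          exact Finset.mem_image.mpr ⟨x₀, Finset.mem_range.mpr hx₀, rfl⟩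
      _ ≤ m - 1 := by
          have := Finset.card_image_le (s := Finset.range m) (f := fun x => dgoal x a)
          rw [Finset.card_range] at this
          omega
  set R := (s.image (fun t => t.2 / 2)).card with hR
  obtain ⟨k, rfl⟩ : ∃ k, m = k + 1 := ⟨m - 1, by omega⟩
  simp only [Nat.add_sub_cancel] at hfib
  have key : k * (k + 2) ≤ k * (2 * R) := by
    have h2 : 2 * (k * R) = k * (2 * R) := by ring
    have h3 : k * (k + 2) + 1 = (k + 1) * (k + 1) := by ring
    omega
  have := Nat.le_of_mul_le_mul_left key (by omega : 0 < k)
  omega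

/-- The key expansion lemma: a half-size goal set has at least `m/2` extra neighbors. -/
lemma grid_key {m : ℕ} (hm : 2 ≤ m) (g : Finset (ℕ × ℕ)) (hg : g ⊆ gridGoals m)
    (hcard : g.card = m * m / 2) :
    m / 2 ≤ ((gridN m g) \ g.image gmu).card := by
  by_cases hfull : ∃ j, j < m ∧ ∀ x, x < m → dgoal x j ∈ g
  · by_cases hempty : ∃ j, j < m ∧ ∀ x, x < m → dgoal x j ∉ g
    · -- a full row and an empty row: vertical witnesses in half the columns
      obtain ⟨j, hj, hjfull⟩ := hfull
      obtain ⟨j', hj', hjempty⟩ := hempty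
      have hne : j ≠ j' := by
        rintro rfl
        exact hjempty 0 (by omega) (hjfull 0 (by omega))
      rcases Nat.lt_or_ge j j' with hlt | hge
      · -- use even columns, shifting up
        have hcb : ∀ a ∈ (Finset.range (m / 2)).image (fun k => 2 * k),
            ∃ w ∈ (gridN m g) \ g.image gmu, w.1 = a := by
          intro a ha
          obtain ⟨k, hk, rfl⟩ := Finset.mem_image.mp ha
          have hk' := Finset.mem_range.mp hk
          have ham : 2 * k < m := by omega
          obtain ⟨t, ht1, ht2, ht3, ht4⟩ :=
            grid_bdry (fun t => dgoal (2 * k) t ∈ g) j' j hlt (hjfull _ ham) (hjempty _ ham)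
          exact ⟨dstart (2 * k) (t + 1),
            dstart_mem_B hg ham (by omega) ht4 _ _ ht3 (adj_vert_even (by omega)), rfl⟩
        have hle := card_le_B _ _ _ hcb
        have hc : ((Finset.range (m / 2)).image (fun k => 2 * k)).card = m / 2 := by
          rw [Finset.card_image_of_injective _ (fun a b h => by omega), Finset.card_range]
        omega
      · -- use odd columns, shifting down
        have hlt : j' < j := by omega
        have hcb : ∀ a ∈ (Finset.range (m / 2)).image (fun k => 2 * k + 1),
            ∃ w ∈ (gridN m g) \ g.image gmu, w.1 = a := by
          intro a ha
          obtain ⟨k, hk, rfl⟩ := Finset.mem_image.mp ha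
          have hk' := Finset.mem_range.mp hk
          have ham : 2 * k + 1 < m := by omega
          obtain ⟨t, ht1, ht2, ht3, ht4⟩ :=
            grid_bdry' (fun t => dgoal (2 * k + 1) t ∈ g) j' j hlt (hjempty _ ham) (hjfull _ ham)
          exact ⟨dstart (2 * k + 1) (t - 1),
            dstart_mem_B hg ham (by omega) ht4 _ _ ht3 (adj_vert_odd (by omega) (by omega)), rfl⟩
        have hle := card_le_B _ _ _ hcb
        have hc : ((Finset.range (m / 2)).image (fun k => 2 * k + 1)).card = m / 2 := by
          rw [Finset.card_image_of_injective _ (fun a b h => by omega), Finset.card_range]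
        omega
    · -- every row has a cell of `g`; some row is full, none is empty
      push_neg at hempty
      set Q := gridGoals m \ g with hQ
      have hQsub : Q ⊆ gridGoals m := Finset.sdiff_subset
      have hQcard : Q.card + m * m / 2 = m * m := by
        have h := Finset.card_sdiff_add_card_eq_card hg
        rw [card_gridGoals, hcard] at h
        rw [← hQ] at h
        exact h
      have hmiss : ∀ j, j < m → ∃ x, x < m ∧ dgoal x j ∉ Q := by
        intro j hjm
        obtain ⟨x, hx, hxg⟩ := hempty j hjm
        exact ⟨x, hx, fun hmem => (Finset.mem_sdiff.mp hmem).2 hxg⟩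
      have hR := row_count hm Q hQsub (by omega) hmiss
      have hcb : ∀ a ∈ Q.image (fun t => t.2 / 2),
          ∃ w ∈ (gridN m g) \ g.image gmu, w.2 / 2 = a := by
        intro a ha
        obtain ⟨u, hu, rfl⟩ := Finset.mem_image.mp ha
        have hu' := Finset.mem_sdiff.mp hu
        have hgoal := goal_ex hu'.1
        refine row_witness hg hgoal.2.1 ?_ ⟨u.1, hgoal.1, by rw [hgoal.2.2]; exact hu'.2⟩
        obtain ⟨x, hx, hxg⟩ := hempty _ hgoal.2.1
        exact ⟨x, hx, hxg⟩
      have hle := card_le_B _ _ _ hcb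
      omega
  · -- no full row: every nonempty row is proper
    push_neg at hfull
    have hR := row_count hm g hg (by omega) hfull
    have hcb : ∀ a ∈ g.image (fun t => t.2 / 2),
        ∃ w ∈ (gridN m g) \ g.image gmu, w.2 / 2 = a := by
      intro a ha
      obtain ⟨t, ht, rfl⟩ := Finset.mem_image.mp ha
      have hgoal := goal_ex (hg ht)
      exact row_witness hg hgoal.2.1 ⟨t.1, hgoal.1, by rw [hgoal.2.2]; exact ht⟩
        (hfull _ hgoal.2.1)
    have hle := card_le_B _ _ _ hcb
    omega

lemma filter_lt_card {n i : ℕ} (hi : i ≤ n) :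
    (Finset.univ.filter (fun j : Fin n => (j : ℕ) < i)).card = i := by
  have heq : (Finset.univ.filter (fun j : Fin n => (j : ℕ) < i)) =
      Finset.attachFin (Finset.range i)
        (fun a ha => lt_of_lt_of_le (Finset.mem_range.mp ha) hi) := by
    ext j
    simp [Finset.mem_attachFin]
  rw [heq, Finset.card_attachFin, Finset.card_range]

lemma urb_lb {m : ℕ} (hm : 2 ≤ m) (π : Fin (m * m) → ℕ × ℕ) (hinj : Function.Injective π)
    (himg : Finset.image π Finset.univ = gridGoals m) : m / 2 ≤ gridURB m π := by
  have him : m * m / 2 ≤ m * m := Nat.div_le_self _ _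
  set g := (Finset.univ.filter (fun j : Fin (m * m) => (j : ℕ) < m * m / 2)).image π with hgdef
  have hg : g ⊆ gridGoals m := by
    intro t ht
    rw [← himg]
    obtain ⟨j, _, rfl⟩ := Finset.mem_image.mp ht
    exact Finset.mem_image_of_mem _ (Finset.mem_univ j)
  have hcard : g.card = m * m / 2 := by
    rw [hgdef, Finset.card_image_of_injective _ hinj, filter_lt_card him]
  have hkey := grid_key hm g hg hcard
  have hN := card_gridN hg
  calc m / 2 ≤ (gridN m g).card - m * m / 2 := by omega
    _ ≤ gridURB m π :=
        Finset.le_sup (f := fun i =>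
          (gridN m ((Finset.univ.filter (fun j : Fin (m * m) => (j : ℕ) < i)).image π)).card - i)
          (Finset.mem_range.mpr (by omega))

lemma umrb_lb {m : ℕ} (hm : 2 ≤ m) : m / 2 ≤ gridUMRB m := by
  have hc : (gridGoals m).card = m * m := card_gridGoals m
  let e := (gridGoals m).equivFin
  let π : Fin (m * m) → ℕ × ℕ := fun j => (e.symm (Fin.cast hc.symm j) : ℕ × ℕ)
  have hinj : Function.Injective π := by
    intro a b h
    have h2 := e.symm.injective (Subtype.ext h)
    exact Fin.ext (by simpa using congrArg Fin.val h2)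
  have himg : Finset.image π Finset.univ = gridGoals m := by
    apply Finset.Subset.antisymm
    · intro t ht
      obtain ⟨j, _, rfl⟩ := Finset.mem_image.mp ht
      exact (e.symm (Fin.cast hc.symm j)).2
    · intro t ht
      refine Finset.mem_image.mpr ⟨Fin.cast hc (e ⟨t, ht⟩), Finset.mem_univ _, ?_⟩
      simp [π]
  have hmem : gridURB m π ∈ {k | ∃ π' : Fin (m * m) → ℕ × ℕ, Function.Injective π' ∧
      Finset.image π' Finset.univ = gridGoals m ∧ gridURB m π' = k} := ⟨π, hinj, himg, rfl⟩
  refine le_csInf ⟨_, hmem⟩ ?_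
  rintro k ⟨π', h1, h2, rfl⟩
  exact urb_lb hm π' h1 h2

/-- There is a constant `c > 0` such that for every `m ≥ 2`, the unlabeled minimum number
of running buffers of the dependency grid `D(m, 2m)` is at least `c · m`; since `D(m, 2m)`
has `n = m²` start (resp. goal) vertices, this says `uMRB(D(m,2m)) = Ω(√n)`. -/
theorem gridUMRB_lower_bound :
    ∃ c : ℝ, 0 < c ∧ ∀ m : ℕ, 2 ≤ m → c * m ≤ (gridUMRB m : ℝ) := by
  refine ⟨1 / 4, by norm_num, fun m hm => ?_⟩
  have h1 : m / 2 ≤ gridUMRB m := umrb_lb hm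
  have h2 : (m : ℝ) ≤ 4 * ((m / 2 : ℕ) : ℝ) := by
    have : m ≤ 4 * (m / 2) := by omega
    exact_mod_cast this
  have h3 : ((m / 2 : ℕ) : ℝ) ≤ (gridUMRB m : ℝ) := by exact_mod_cast h1
  linarith
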